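/- Every Lie subalgebra (over ℝ) of the Lie algebra of smooth vector fields on ℝ² that contains the vector fields X₁ = x²∂_x and X₂ = xy∂_x is infinite-dimensional as a real vector space. More precisely, setting Y₀ = X₁ and Y_{n+1} = [X₂, Y_n], one has Y_n = x²yⁿ∂_x for all n ≥ 0, and the vector fields {x²yⁿ∂_x : n ∈ ℕ} are linearly independent over ℝ. Consequently, the predator–prey system dx/dt = b(t)x + c(t)y + d(t)x² + e(t)xy + f(t)y², dy/dt = y with non-constant, non-proportional d(t), e(t) is in general not a Lie system. -/

import Mathlib

namespace Stmt18

/-- Lie bracket of planar vector fields: [X,Y](p) = DY(p)·X(p) − DX(p)·Y(p). -/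
noncomputable def lb (X Y : ℝ × ℝ → ℝ × ℝ) : ℝ × ℝ → ℝ × ℝ :=
  fun p => fderiv ℝ Y p (X p) - fderiv ℝ X p (Y p)

/-- X₁ = x²∂ₓ. -/
def X1 : ℝ × ℝ → ℝ × ℝ := fun p => (p.1 ^ 2, 0)

/-- X₂ = xy∂ₓ. -/
def X2 : ℝ × ℝ → ℝ × ℝ := fun p => (p.1 * p.2, 0)

/-- Y₀ = X₁ and Y_{n+1} = [X₂, Y_n]. -/
noncomputable def Yseq : ℕ → (ℝ × ℝ → ℝ × ℝ)
  | 0 => X1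
  | n + 1 => lb X2 (Yseq n)
open ContinuousLinearMap

lemma hpow (n : ℕ) (p : ℝ × ℝ) :
    HasFDerivAt (fun q : ℝ × ℝ => q.2 ^ n)
      (((n : ℝ) * p.2 ^ (n - 1)) • ContinuousLinearMap.snd ℝ ℝ ℝ) p := by
  induction n with
  | zero => simpa using hasFDerivAt_const (1 : ℝ) p
  | succ n ih =>
    have h := ih.mul (hasFDerivAt_snd (𝕜 := ℝ) (p := p))
    have hfun : (fun q : ℝ × ℝ => q.2 ^ (n + 1)) = fun q : ℝ × ℝ => q.2 ^ n * q.2 := by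
      funext q; rw [pow_succ]
    rw [hfun]
    refine h.congr_fderiv ?_
    refine ContinuousLinearMap.ext fun v => ?_
    simp only [ContinuousLinearMap.add_apply, ContinuousLinearMap.smul_apply,
      ContinuousLinearMap.coe_snd', smul_eq_mul]
    rcases n with _ | m
    · simp
    · simp only [Nat.add_sub_cancel, Nat.cast_add, Nat.cast_one]
      rw [pow_succ]
      ring

lemma hx2 (p : ℝ × ℝ) :
    HasFDerivAt (fun q : ℝ × ℝ => q.1 ^ 2)
      ((2 * p.1) • ContinuousLinearMap.fst ℝ ℝ ℝ) p := by
  have h := (hasFDerivAt_fst (𝕜 := ℝ) (p := p)).mul (hasFDerivAt_fst (𝕜 := ℝ) (p := p))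
  have hfun : (fun q : ℝ × ℝ => q.1 ^ 2) = fun q : ℝ × ℝ => q.1 * q.1 := by
    funext q; rw [pow_two]
  rw [hfun]
  refine h.congr_fderiv ?_
  refine ContinuousLinearMap.ext fun v => ?_
  simp only [ContinuousLinearMap.add_apply, ContinuousLinearMap.smul_apply,
    ContinuousLinearMap.coe_fst', smul_eq_mul]
  ring

lemma hf (n : ℕ) (p : ℝ × ℝ) :
    HasFDerivAt (fun q : ℝ × ℝ => q.1 ^ 2 * q.2 ^ n)
      ((2 * p.1 * p.2 ^ n) • ContinuousLinearMap.fst ℝ ℝ ℝ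
        + ((n : ℝ) * p.1 ^ 2 * p.2 ^ (n - 1)) • ContinuousLinearMap.snd ℝ ℝ ℝ) p := by
  refine ((hx2 p).mul (hpow n p)).congr_fderiv ?_
  refine ContinuousLinearMap.ext fun v => ?_
  simp only [ContinuousLinearMap.add_apply, ContinuousLinearMap.smul_apply,
    ContinuousLinearMap.coe_fst', ContinuousLinearMap.coe_snd', smul_eq_mul]
  ring

lemma hF (n : ℕ) (p : ℝ × ℝ) :
    HasFDerivAt (fun q : ℝ × ℝ => ((q.1 ^ 2 * q.2 ^ n, 0) : ℝ × ℝ))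
      (((2 * p.1 * p.2 ^ n) • ContinuousLinearMap.fst ℝ ℝ ℝ
        + ((n : ℝ) * p.1 ^ 2 * p.2 ^ (n - 1)) • ContinuousLinearMap.snd ℝ ℝ ℝ).prod 0) p :=
  HasFDerivAt.prodMk (hf n p) (hasFDerivAt_const (0 : ℝ) p)

lemma hX2 (p : ℝ × ℝ) :
    HasFDerivAt X2
      ((p.1 • ContinuousLinearMap.snd ℝ ℝ ℝ
        + p.2 • ContinuousLinearMap.fst ℝ ℝ ℝ).prod 0) p :=
  HasFDerivAt.prodMk ((hasFDerivAt_fst (𝕜 := ℝ) (p := p)).mul (hasFDerivAt_snd (𝕜 := ℝ) (p := p)))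
    (hasFDerivAt_const (0 : ℝ) p)

lemma part1 : ∀ n : ℕ, Yseq n = fun p => ((p.1 ^ 2 * p.2 ^ n, 0) : ℝ × ℝ) := by
  intro n
  induction n with
  | zero => funext p; simp [Yseq, X1]
  | succ n ih =>
    funext p
    show lb X2 (Yseq n) p = _
    rw [ih]
    unfold lb
    rw [(hF n p).fderiv, (hX2 p).fderiv]
    simp only [ContinuousLinearMap.prod_apply, ContinuousLinearMap.add_apply,
      ContinuousLinearMap.smul_apply, ContinuousLinearMap.coe_fst',
      ContinuousLinearMap.coe_snd', smul_eq_mul, ContinuousLinearMap.zero_apply, X2]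
    rw [Prod.mk_sub_mk, Prod.mk.injEq]
    constructor
    · rw [pow_succ]; ring
    · simp

open Polynomial in
lemma li_pows : LinearIndependent ℝ (fun (n : ℕ) => (fun t : ℝ => t ^ n : ℝ → ℝ)) := by
  have hXpow : LinearIndependent ℝ (fun n : ℕ => (X : ℝ[X]) ^ n) := by
    have := (Polynomial.basisMonomials ℝ).linearIndependent
    rw [Polynomial.coe_basisMonomials] at this
    simpa [Polynomial.X_pow_eq_monomial] using this
  let φ : ℝ[X] →ₗ[ℝ] (ℝ → ℝ) := (Polynomial.aeval (id : ℝ → ℝ)).toLinearMap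
  have hker : LinearMap.ker φ = ⊥ := by
    rw [LinearMap.ker_eq_bot']
    intro p hp
    apply Polynomial.funext (q := 0)
    intro r
    have := congrFun hp r
    simpa [φ, Polynomial.aeval_def, Polynomial.eval₂_eq_eval_map] using this
  have h := hXpow.map' φ hker
  convert h using 1
  case e'_5 => rfl
  case e'_6 => rfl
  funext n
  funext t
  simp [φ]

lemma part2 : LinearIndependent ℝ (fun (n : ℕ) => (fun p => (p.1 ^ 2 * p.2 ^ n, 0) :
    ℝ × ℝ → ℝ × ℝ)) := by
  let g : (ℝ × ℝ → ℝ × ℝ) →ₗ[ℝ] (ℝ → ℝ) :=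
    { toFun := fun f => fun t => (f (1, t)).1
      map_add' := fun f h => rfl
      map_smul' := fun c f => rfl }
  apply LinearIndependent.of_comp g
  have : (g ∘ fun (n : ℕ) => (fun p => (p.1 ^ 2 * p.2 ^ n, 0) : ℝ × ℝ → ℝ × ℝ))
      = fun n => (fun t : ℝ => t ^ n : ℝ → ℝ) := by
    funext n t; simp [g]
  rw [this]
  exact li_pows

/-- One has Y_n = x²yⁿ∂ₓ for all n, the vector fields x²yⁿ∂ₓ are linearly independent
over ℝ, and consequently every Lie subalgebra of the smooth vector fields on ℝ²
containing X₁ = x²∂ₓ and X₂ = xy∂ₓ is infinite-dimensional: the corresponding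
predator–prey system is in general not a Lie system. -/
theorem stmt_18 :
    (∀ n : ℕ, Yseq n = fun p => (p.1 ^ 2 * p.2 ^ n, 0)) ∧
    LinearIndependent ℝ (fun (n : ℕ) => (fun p => (p.1 ^ 2 * p.2 ^ n, 0) :
      ℝ × ℝ → ℝ × ℝ)) ∧
    ∀ W : Submodule ℝ (ℝ × ℝ → ℝ × ℝ),
      (∀ A ∈ W, ∀ B ∈ W, lb A B ∈ W) → X1 ∈ W → X2 ∈ W →
        ¬ FiniteDimensional ℝ W := by
  refine ⟨part1, part2, ?_⟩
  intro W hcl h1 h2 hfd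
  have hmem : ∀ n : ℕ, Yseq n ∈ W := by
    intro n
    induction n with
    | zero => exact h1
    | succ n ih => exact hcl _ h2 _ ih
  have hli : LinearIndependent ℝ (fun n : ℕ => (⟨Yseq n, hmem n⟩ : W)) := by
    apply LinearIndependent.of_comp W.subtype
    have h0 : (W.subtype ∘ fun n : ℕ => (⟨Yseq n, hmem n⟩ : W)) = Yseq := rfl
    rw [h0]
    have h1 : Yseq = fun (n : ℕ) => (fun p => (p.1 ^ 2 * p.2 ^ n, 0) : ℝ × ℝ → ℝ × ℝ) := by
      funext n; exact part1 n
    rw [h1]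
    exact part2
  haveI : Finite ℕ := hli.finite
  exact not_finite ℕ

end Stmt18
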